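/- Let L be a finite set of lines in F_q^n and X' ⊆ ⋃_{l∈L} l a set with ∑_{l∈L} |l ∩ X'| ≥ (99/100)·q·|L|. Then there exists a point x₁ ∈ X' such that at least half of the lines of L passing through x₁ satisfy |l ∩ X'| ≥ q/2. -/
import Mathlib


def IsLine (F : Type*) [Field F] {n : ℕ} (l : Set (Fin n → F)) : Prop :=
  ∃ a v : Fin n → F, v ≠ 0 ∧ l = {x | ∃ t : F, x = a + t • v}

lemma line_ncard {F : Type*} [Field F] [Fintype F] {n : ℕ} {l : Set (Fin n → F)}
    (hl : IsLine F l) : l.ncard = Fintype.card F := by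
  obtain ⟨a, v, hv, rfl⟩ := hl
  have : {x : Fin n → F | ∃ t : F, x = a + t • v} = Set.range (fun t : F => a + t • v) := by
    ext x; simp [Set.mem_range, eq_comm]
  rw [this, ← Nat.card_coe_set_eq,
    Nat.card_range_of_injective (f := fun t : F => a + t • v), Nat.card_eq_fintype_card]
  intro s t hst
  simp only [add_right_injective] at hst
  have h2 : (s - t) • v = 0 := by
    have := add_left_cancel hst
    rw [sub_smul, this, sub_self]
  rcases smul_eq_zero.mp h2 with h | h
  · exact sub_eq_zero.mp h
  · exact absurd h hv

theorem stmt_16 {F : Type*} [Field F] [Fintype F] {n : ℕ}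
    (L : Finset (Set (Fin n → F))) (hLne : L.Nonempty)
    (hL : ∀ l ∈ L, IsLine F l)
    (X' : Set (Fin n → F)) (hsub : X' ⊆ ⋃ l ∈ L, l)
    (hsum : (99 : ℝ) / 100 * (Fintype.card F : ℝ) * L.card ≤
      ∑ l ∈ L, ((l ∩ X').ncard : ℝ)) :
    ∃ x₁ ∈ X',
      ({l | l ∈ L ∧ x₁ ∈ l}).ncard ≤
        2 * ({l | l ∈ L ∧ x₁ ∈ l ∧
              (Fintype.card F : ℝ) / 2 ≤ ((l ∩ X').ncard : ℝ)}).ncard := by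
  classical
  by_contra hcon
  push_neg at hcon
  set q : ℕ := Fintype.card F with hq
  have hq1 : 1 ≤ q := Fintype.card_pos
  have hXfin : X'.Finite := Set.toFinite X'
  set Xf : Finset (Fin n → F) := hXfin.toFinset with hXf
  -- intersection cardinality as a filter card
  have hA : ∀ l, (l ∩ X').ncard = (Xf.filter (· ∈ l)).card := by
    intro l
    rw [← Set.ncard_coe_finset (Xf.filter (· ∈ l))]
    congr 1
    ext x
    simp only [Finset.coe_filter, hXf, Set.Finite.mem_toFinset, Set.mem_inter_iff,
      Set.mem_setOf_eq]
    exact ⟨fun h => ⟨h.2, h.1⟩, fun h => ⟨h.2, h.1⟩⟩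
  -- each line meets X' in at most q points
  have hNq : ∀ l ∈ L, (l ∩ X').ncard ≤ q := by
    intro l hl
    calc (l ∩ X').ncard ≤ l.ncard :=
          Set.ncard_le_ncard Set.inter_subset_left (Set.toFinite l)
      _ = q := line_ncard (hL l hl)
  -- double counting
  have key : ∀ w : Set (Fin n → F) → ℝ,
      ∑ l ∈ L, ((l ∩ X').ncard : ℝ) * w l
        = ∑ x ∈ Xf, ∑ l ∈ L.filter (fun l => x ∈ l), w l := by
    intro w
    have : ∀ l ∈ L, ((l ∩ X').ncard : ℝ) * w l = ∑ x ∈ Xf, if x ∈ l then w l else 0 := by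
      intro l _
      rw [← Finset.sum_filter, Finset.sum_const, hA l, nsmul_eq_mul]
    rw [Finset.sum_congr rfl this, Finset.sum_comm]
    refine Finset.sum_congr rfl fun x _ => ?_
    rw [Finset.sum_filter]
  -- per-point bound under the negation
  have hx : ∀ x ∈ Xf, ∑ l ∈ L.filter (fun l => x ∈ l), ((l ∩ X').ncard : ℝ)
      ≤ 3 / 4 * q * (L.filter (fun l => x ∈ l)).card := by
    intro x hxX
    have hxX' : x ∈ X' := by simpa [hXf, Set.Finite.mem_toFinset] using hxX
    set Lx := L.filter (fun l => x ∈ l) with hLx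
    set P : Set (Fin n → F) → Prop := fun l => (q : ℝ) / 2 ≤ ((l ∩ X').ncard : ℝ) with hP
    have hsets : {l | l ∈ L ∧ x ∈ l} = (Lx : Set (Set (Fin n → F))) := by
      ext l; simp [hLx]
    have hsetg : {l | l ∈ L ∧ x ∈ l ∧ P l} = ((Lx.filter P : Finset _) : Set (Set (Fin n → F))) := by
      ext l; simp [hLx, and_assoc]
    have hneg := hcon x hxX'
    rw [hsets, hsetg, Set.ncard_coe_finset, Set.ncard_coe_finset] at hneg
    -- hneg : 2 * (Lx.filter P).card < Lx.card
    have hsplit : (Lx.filter P).card + (Lx.filter (fun l => ¬ P l)).card = Lx.card :=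
      Finset.card_filter_add_card_filter_not _
    have hsum_split : ∑ l ∈ Lx, ((l ∩ X').ncard : ℝ)
        = ∑ l ∈ Lx.filter P, ((l ∩ X').ncard : ℝ)
          + ∑ l ∈ Lx.filter (fun l => ¬ P l), ((l ∩ X').ncard : ℝ) :=
      (Finset.sum_filter_add_sum_filter_not _ _ _).symm
    have hg : ∑ l ∈ Lx.filter P, ((l ∩ X').ncard : ℝ) ≤ (Lx.filter P).card * q := by
      calc ∑ l ∈ Lx.filter P, ((l ∩ X').ncard : ℝ) ≤ ∑ _l ∈ Lx.filter P, (q : ℝ) := by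
            refine Finset.sum_le_sum fun l hl => ?_
            have hlL : l ∈ L := Finset.mem_of_mem_filter l (Finset.mem_of_mem_filter l hl)
            exact_mod_cast hNq l hlL
        _ = (Lx.filter P).card * q := by rw [Finset.sum_const, nsmul_eq_mul]
    have hb : ∑ l ∈ Lx.filter (fun l => ¬ P l), ((l ∩ X').ncard : ℝ)
        ≤ (Lx.filter (fun l => ¬ P l)).card * ((q : ℝ) / 2) := by
      calc ∑ l ∈ Lx.filter (fun l => ¬ P l), ((l ∩ X').ncard : ℝ)
          ≤ ∑ _l ∈ Lx.filter (fun l => ¬ P l), ((q : ℝ) / 2) := by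
            refine Finset.sum_le_sum fun l hl => ?_
            have := (Finset.mem_filter.mp hl).2
            simp only [hP, not_le] at this
            exact this.le
        _ = (Lx.filter (fun l => ¬ P l)).card * ((q : ℝ) / 2) := by
            rw [Finset.sum_const, nsmul_eq_mul]
    have h2g : (2 : ℝ) * (Lx.filter P).card ≤ Lx.card := by exact_mod_cast hneg.le
    have hcardeq : ((Lx.filter P).card : ℝ) + ((Lx.filter (fun l => ¬ P l)).card : ℝ)
        = (Lx.card : ℝ) := by exact_mod_cast hsplit
    have hq0 : (0 : ℝ) ≤ q := by positivity
    nlinarith [hsum_split, hg, hb,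
      mul_nonneg hq0 (sub_nonneg.mpr h2g)]
  -- assemble
  set S : ℝ := ∑ l ∈ L, ((l ∩ X').ncard : ℝ) with hS
  have hS_ub : S ≤ q * L.card := by
    have h := Finset.sum_le_sum (s := L) (f := fun l => ((l ∩ X').ncard : ℝ))
      (g := fun _ => (q : ℝ)) fun l hl => Nat.cast_le.mpr (hNq l hl)
    rw [Finset.sum_const, nsmul_eq_mul] at h
    rw [hS]; linarith [h]
  have hsq : ∑ l ∈ L, ((l ∩ X').ncard : ℝ) ^ 2 ≤ 3 / 4 * q * S := by
    have h1 : ∑ l ∈ L, ((l ∩ X').ncard : ℝ) ^ 2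
        = ∑ x ∈ Xf, ∑ l ∈ L.filter (fun l => x ∈ l), ((l ∩ X').ncard : ℝ) := by
      simpa [sq] using key (fun l => ((l ∩ X').ncard : ℝ))
    have h2 : S = ∑ x ∈ Xf, ((L.filter (fun l => x ∈ l)).card : ℝ) := by
      have := key (fun _ => (1 : ℝ))
      simpa [hS] using this
    rw [h1, h2, Finset.mul_sum]
    exact Finset.sum_le_sum hx
  have hCS : S ^ 2 ≤ (L.card : ℝ) * ∑ l ∈ L, ((l ∩ X').ncard : ℝ) ^ 2 := by
    rw [hS]
    exact sq_sum_le_card_mul_sum_sq (s := L) (f := fun l => ((l ∩ X').ncard : ℝ))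
  have hL1 : (1 : ℝ) ≤ L.card := by
    have := hLne.card_pos; exact_mod_cast this
  have hq1' : (1 : ℝ) ≤ q := by exact_mod_cast hq1
  have hlow : (0 : ℝ) ≤ 99 / 100 * q * L.card := by positivity
  have hfinal : (99 / 100 * (q : ℝ) * L.card) ^ 2 ≤ S ^ 2 := by
    have := hsum
    nlinarith
  nlinarith [hS_ub, hsq, hCS, hfinal, mul_pos (lt_of_lt_of_le one_pos hq1')
    (lt_of_lt_of_le one_pos hL1)]
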